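/- Let w_1, …, w_n be independent random variables (the item weights), where for a fixed δ > 0 each w_i takes values in the interval [a_i − δ, a_i + δ] almost surely and has expectation E[w_i] = a_i. Fix a solution x ∈ {0,1}^n with s := Σ_{i=1}^n x_i > 0, set W(X) = Σ_{i=1}^n w_i x_i and E_W(X) = Σ_{i=1}^n a_i x_i, and let B be a real number with B ≥ E_W(X). Then Pr[W(X) ≥ B] ≤ ( e^{(B − E_W(X))/(δ s)} / ( ((δ s + B − E_W(X))/(δ s))^{(δ s + B − E_W(X))/(δ s)} ) )^{s/2}. -/

import Mathlib

open MeasureTheory ProbabilityTheory Finset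

/-- Chernoff bound for the chance-constrained knapsack problem: for independent
item weights `w i` supported a.s. in `[a i - δ, a i + δ]` with mean `a i`, a
solution `x ∈ {0,1}^n` with `s = ∑ i, x i > 0`, weight `W(X) = ∑ i, w i * x i`,
expected weight `E_W(X) = ∑ i, a i * x i` and capacity `B ≥ E_W(X)`,
`Pr[W(X) ≥ B] ≤ (e^((B-E_W(X))/(δs)) / ((δs+B-E_W(X))/(δs))^((δs+B-E_W(X))/(δs)))^(s/2)`. -/
theorem chernoff_bound_chance_constrained_knapsack
    {Ω : Type*} [MeasurableSpace Ω] (μ : Measure Ω) [IsProbabilityMeasure μ]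
    (n : ℕ) (w : Fin n → Ω → ℝ) (a : Fin n → ℝ) (δ : ℝ) (hδ : 0 < δ)
    (hmeas : ∀ i, Measurable (w i))
    (hindep : iIndepFun w μ)
    (hrange : ∀ i, ∀ᵐ ω ∂μ, w i ω ∈ Set.Icc (a i - δ) (a i + δ))
    (hmean : ∀ i, μ[w i] = a i)
    (x : Fin n → ℝ) (hx : ∀ i, x i = 0 ∨ x i = 1)
    (s : ℝ) (hs : s = ∑ i, x i) (hs_pos : 0 < s)
    (B : ℝ) (hB : ∑ i, a i * x i ≤ B) :
    (μ {ω | B ≤ ∑ i, w i ω * x i}).toReal ≤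
      (Real.exp ((B - ∑ i, a i * x i) / (δ * s)) /
          ((δ * s + B - ∑ i, a i * x i) / (δ * s)) ^
            ((δ * s + B - ∑ i, a i * x i) / (δ * s))) ^ (s / 2) := by
  classical
  set E : ℝ := ∑ i, a i * x i with hE
  set ε : ℝ := (B - E) / (δ * s) with hεdef
  have hδs : 0 < δ * s := mul_pos hδ hs_pos
  have hε : 0 ≤ ε := div_nonneg (by linarith) hδs.le
  have h1ε : (0:ℝ) < 1 + ε := by linarith
  set t : ℝ := Real.log (1 + ε) with htdef
  have ht : 0 ≤ t := Real.log_nonneg (by linarith)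
  have hexpt : Real.exp t = 1 + ε := Real.exp_log h1ε
  -- normalized variables
  set y : Fin n → Ω → ℝ := fun i ω => (w i ω - (a i - δ)) / (2 * δ) * x i with hy
  have hymeas : ∀ i, Measurable (y i) := fun i =>
    (((hmeas i).sub measurable_const).div_const _).mul_const _
  have hyindep : iIndepFun y μ := by
    have : ∀ i, Measurable (fun z : ℝ => (z - (a i - δ)) / (2 * δ) * x i) := fun i =>
      ((measurable_id.sub measurable_const).div_const _).mul_const _
    exact hindep.comp _ this
  have hx01 : ∀ i, 0 ≤ x i ∧ x i ≤ 1 := by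
    intro i; rcases hx i with h | h <;> rw [h] <;> norm_num
  have hyrange : ∀ i, ∀ᵐ ω ∂μ, y i ω ∈ Set.Icc (0:ℝ) 1 := by
    intro i
    filter_upwards [hrange i] with ω hω
    rcases hx i with h | h
    · simp [hy, h]
    · simp only [hy, h, mul_one]
      constructor
      · apply div_nonneg (by linarith [hω.1]) (by linarith)
      · rw [div_le_one (by linarith)]; linarith [hω.2]
  have hwint : ∀ i, Integrable (w i) μ := by
    intro i
    refine Integrable.mono' (integrable_const (|a i| + δ)) (hmeas i).aestronglyMeasurable ?_
    filter_upwards [hrange i] with ω hω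
    rw [Real.norm_eq_abs, abs_le]
    constructor
    · have := hω.1; have := neg_abs_le (a i); linarith
    · have := hω.2; have := le_abs_self (a i); linarith
  have hyint : ∀ i, Integrable (y i) μ := by
    intro i
    refine Integrable.mono' (integrable_const 1) (hymeas i).aestronglyMeasurable ?_
    filter_upwards [hyrange i] with ω hω
    rw [Real.norm_eq_abs, abs_le]
    exact ⟨by linarith [hω.1], hω.2⟩
  have hymean : ∀ i, μ[y i] = x i / 2 := by
    intro i
    have heq : y i = fun ω => (w i ω - (a i - δ)) * (x i / (2 * δ)) := by
      funext ω; simp only [hy]; ring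
    rw [heq, integral_mul_const, integral_sub (hwint i) (integrable_const _),
      integral_const, hmean i]
    simp only [measure_univ, probReal_univ, ENNReal.toReal_one, smul_eq_mul, one_mul]
    field_simp
    ring
  -- integrability of exp(t * y i)
  have hyexpint : ∀ i, Integrable (fun ω => Real.exp (t * y i ω)) μ := by
    intro i
    refine Integrable.mono' (integrable_const (Real.exp t))
      (((hymeas i).const_mul t).exp).aestronglyMeasurable ?_
    filter_upwards [hyrange i] with ω hω
    rw [Real.norm_eq_abs, abs_of_pos (Real.exp_pos _), Real.exp_le_exp]
    nlinarith [hω.1, hω.2]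
  -- mgf bound for each y i
  have hmgf_le : ∀ i, mgf (y i) μ t ≤ Real.exp ((Real.exp t - 1) * (x i / 2)) := by
    intro i
    have hpt : ∀ᵐ ω ∂μ, Real.exp (t * y i ω) ≤ 1 + (Real.exp t - 1) * y i ω := by
      filter_upwards [hyrange i] with ω hω
      have hc := convexOn_exp.2 (Set.mem_univ (0:ℝ)) (Set.mem_univ t)
        (show (0:ℝ) ≤ 1 - y i ω by linarith [hω.2]) hω.1 (by ring)
      have : Real.exp ((1 - y i ω) • (0:ℝ) + y i ω • t)
          ≤ (1 - y i ω) • Real.exp 0 + y i ω • Real.exp t := hc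
      simp only [smul_eq_mul, mul_zero, zero_add, Real.exp_zero, mul_one] at this
      calc Real.exp (t * y i ω) = Real.exp (y i ω * t) := by rw [mul_comm]
        _ ≤ (1 - y i ω) + y i ω * Real.exp t := this
        _ = 1 + (Real.exp t - 1) * y i ω := by ring
    have hint2 : Integrable (fun ω => 1 + (Real.exp t - 1) * y i ω) μ :=
      (integrable_const 1).add ((hyint i).const_mul _)
    have h1 : mgf (y i) μ t ≤ μ[fun ω => 1 + (Real.exp t - 1) * y i ω] :=
      integral_mono_ae (hyexpint i) hint2 hpt
    have h2 : μ[fun ω => 1 + (Real.exp t - 1) * y i ω]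
        = 1 + (Real.exp t - 1) * (x i / 2) := by
      rw [integral_add (integrable_const 1) ((hyint i).const_mul _),
        integral_const, integral_const_mul, hymean i]
      simp
    have h3 : 1 + (Real.exp t - 1) * (x i / 2) ≤ Real.exp ((Real.exp t - 1) * (x i / 2)) := by
      have := Real.add_one_le_exp ((Real.exp t - 1) * (x i / 2))
      linarith
    linarith
  -- mgf of sum
  set Y : Ω → ℝ := ∑ i, y i with hYdef
  have hYmgf : mgf Y μ t ≤ Real.exp ((Real.exp t - 1) * (s / 2)) := by
    rw [hYdef, hyindep.mgf_sum hymeas]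
    calc ∏ i, mgf (y i) μ t ≤ ∏ i, Real.exp ((Real.exp t - 1) * (x i / 2)) :=
          Finset.prod_le_prod (fun i _ => mgf_nonneg) (fun i _ => hmgf_le i)
      _ = Real.exp (∑ i, (Real.exp t - 1) * (x i / 2)) := by rw [Real.exp_sum]
      _ = Real.exp ((Real.exp t - 1) * (s / 2)) := by
          rw [← Finset.mul_sum, ← Finset.sum_div, ← hs]
  -- Chernoff
  set c : ℝ := (1 + ε) * (s / 2) with hcdef
  have hset : {ω | B ≤ ∑ i, w i ω * x i} = {ω | c ≤ Y ω} := by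
    ext ω
    simp only [Set.mem_setOf_eq]
    have hYω : Y ω * (2 * δ) = ∑ i, w i ω * x i - E + δ * s := by
      have : Y ω * (2 * δ) = ∑ i, (w i ω - (a i - δ)) * x i := by
        rw [hYdef, Finset.sum_apply, Finset.sum_mul]
        refine Finset.sum_congr rfl fun i _ => ?_
        simp only [hy]
        field_simp
      rw [this, hE, hs]
      rw [Finset.mul_sum]
      rw [← Finset.sum_sub_distrib, ← Finset.sum_add_distrib]
      refine Finset.sum_congr rfl fun i _ => ?_
      ring
    have hc2 : c * (2 * δ) = B - E + δ * s := by
      rw [hcdef, hεdef]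
      field_simp
      ring
    constructor
    · intro h
      have h2 : c * (2 * δ) ≤ Y ω * (2 * δ) := by rw [hYω, hc2]; linarith
      exact le_of_mul_le_mul_right h2 (by linarith)
    · intro h
      have h2 : c * (2 * δ) ≤ Y ω * (2 * δ) :=
        mul_le_mul_of_nonneg_right h (by linarith)
      rw [hYω, hc2] at h2
      linarith
  have hchern : (μ {ω | c ≤ Y ω}).toReal ≤ Real.exp (-t * c) * mgf Y μ t :=
    measure_ge_le_exp_mul_mgf c ht (hyindep.integrable_exp_mul_sum hymeas fun i _ => hyexpint i)
  have hbound : (μ {ω | B ≤ ∑ i, w i ω * x i}).toReal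
      ≤ Real.exp ((ε - (1 + ε) * t) * (s / 2)) := by
    rw [hset]
    calc (μ {ω | c ≤ Y ω}).toReal ≤ Real.exp (-t * c) * mgf Y μ t := hchern
      _ ≤ Real.exp (-t * c) * Real.exp ((Real.exp t - 1) * (s / 2)) := by
          exact mul_le_mul_of_nonneg_left hYmgf (Real.exp_pos _).le
      _ = Real.exp ((ε - (1 + ε) * t) * (s / 2)) := by
          rw [← Real.exp_add, hexpt, hcdef]; ring_nf
  -- rewrite the RHS
  have hfrac : (δ * s + B - E) / (δ * s) = 1 + ε := by
    rw [hεdef]; field_simp; ring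
  have hRHS : (Real.exp ((B - E) / (δ * s)) /
      ((δ * s + B - E) / (δ * s)) ^ ((δ * s + B - E) / (δ * s))) ^ (s / 2)
      = Real.exp ((ε - (1 + ε) * t) * (s / 2)) := by
    rw [hfrac, ← hεdef]
    rw [Real.rpow_def_of_pos h1ε, ← htdef, ← Real.exp_sub, ← Real.exp_mul]
    ring_nf
  rw [hRHS]
  exact hbound
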